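/- (Identifiability) Fix X̄_S, X̄_L ∈ ℝ^{m×n} and let Ω̄ be the subspace of matrices supported on supp(X̄_S) and T̄ = {X₁ + X₂ : range(X₁) ⊆ range(X̄_L), range(X₂ᵀ) ⊆ range(X̄_Lᵀ)}. If inf_{ρ>0} α(ρ)β(ρ) < 1, then Ω̄ ∩ T̄ = {0}. -/

import Mathlib

open scoped BigOperators
open Matrix
noncomputable section

namespace SLR

/-- Trace inner product `⟨A,B⟩ = tr(AᵀB)`. -/
def inner' {m n : ℕ} (A B : Matrix (Fin m) (Fin n) ℝ) : ℝ := ∑ i, ∑ j, A i j * B i j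

/-- Entrywise 1-norm. -/
def l1 {m n : ℕ} (M : Matrix (Fin m) (Fin n) ℝ) : ℝ := ∑ i, ∑ j, |M i j|

/-- Entrywise ∞-norm (maximum absolute value of an entry). -/
def linf {m n : ℕ} (M : Matrix (Fin m) (Fin n) ℝ) : ℝ := ⨆ i, ⨆ j, |M i j|

/-- Frobenius norm. -/
def frob {m n : ℕ} (M : Matrix (Fin m) (Fin n) ℝ) : ℝ :=
  Real.sqrt (∑ i, ∑ j, (M i j) ^ 2)

/-- `‖M‖_{1→1}`: maximum column absolute sum. -/
def n11 {m n : ℕ} (M : Matrix (Fin m) (Fin n) ℝ) : ℝ := ⨆ j, ∑ i, |M i j|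

/-- `‖M‖_{∞→∞}`: maximum row absolute sum. -/
def nII {m n : ℕ} (M : Matrix (Fin m) (Fin n) ℝ) : ℝ := ⨆ i, ∑ j, |M i j|

/-- Spectral norm `‖M‖_{2→2}`. -/
def spec {m n : ℕ} (M : Matrix (Fin m) (Fin n) ℝ) : ℝ :=
  ‖LinearMap.toContinuousLinearMap (Matrix.toEuclideanLin M)‖

/-- Trace (nuclear) norm: sum of singular values. -/
def traceNorm {m n : ℕ} (M : Matrix (Fin m) (Fin n) ℝ) : ℝ :=
  ∑ i, Real.sqrt ((Matrix.isHermitian_conjTranspose_mul_self M).eigenvalues i)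

/-- The hybrid norm `‖M‖_{♯(ρ)} = max{ρ‖M‖_{1→1}, ρ⁻¹‖M‖_{∞→∞}}`. -/
def sharp {m n : ℕ} (ρ : ℝ) (M : Matrix (Fin m) (Fin n) ℝ) : ℝ :=
  max (ρ * n11 M) (ρ⁻¹ * nII M)

/-- The dual norm `‖·‖_{♭(ρ)}` of `‖·‖_{♯(ρ)}`. -/
def flat {m n : ℕ} (ρ : ℝ) (M : Matrix (Fin m) (Fin n) ℝ) : ℝ :=
  sSup {x : ℝ | ∃ N : Matrix (Fin m) (Fin n) ℝ, sharp ρ N ≤ 1 ∧ x = inner' M N}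

/-- Induced operator norm of a map `T` with respect to the norm `f`. -/
def opNormWrt {m n : ℕ} (f : Matrix (Fin m) (Fin n) ℝ → ℝ)
    (T : Matrix (Fin m) (Fin n) ℝ → Matrix (Fin m) (Fin n) ℝ) : ℝ :=
  sSup {x : ℝ | ∃ M, f M ≤ 1 ∧ x = f (T M)}

/-- Entrywise sign matrix. -/
def signM {m n : ℕ} (M : Matrix (Fin m) (Fin n) ℝ) : Matrix (Fin m) (Fin n) ℝ :=
  Matrix.of fun i j => Real.sign (M i j)

/-- Orthogonal projection onto matrices supported on `supp X`. -/
def POmega {m n : ℕ} (X : Matrix (Fin m) (Fin n) ℝ) (M : Matrix (Fin m) (Fin n) ℝ) :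
    Matrix (Fin m) (Fin n) ℝ :=
  Matrix.of fun i j => if X i j ≠ 0 then M i j else 0

/-- Orthogonal projection onto the tangent space `T` determined by `U`, `V`. -/
def PT {m n r : ℕ} (U : Matrix (Fin m) (Fin r) ℝ) (V : Matrix (Fin n) (Fin r) ℝ)
    (M : Matrix (Fin m) (Fin n) ℝ) : Matrix (Fin m) (Fin n) ℝ :=
  U * Uᵀ * M + M * (V * Vᵀ) - U * Uᵀ * M * (V * Vᵀ)

/-- `‖U‖_{2→∞}`: maximum row Euclidean norm. -/
def two2inf {m r : ℕ} (U : Matrix (Fin m) (Fin r) ℝ) : ℝ :=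
  ⨆ i, Real.sqrt (∑ k, (U i k) ^ 2)

/-- The sparsity measure `α(ρ)` of `X̄_S`. -/
def alpha {m n : ℕ} (X : Matrix (Fin m) (Fin n) ℝ) (ρ : ℝ) : ℝ :=
  max (ρ * n11 (signM X)) (ρ⁻¹ * nII (signM X))

/-- The incoherence measure `β(ρ)` of the singular vectors `U`, `V`. -/
def beta {m n r : ℕ} (U : Matrix (Fin m) (Fin r) ℝ) (V : Matrix (Fin n) (Fin r) ℝ)
    (ρ : ℝ) : ℝ :=
  ρ⁻¹ * linf (U * Uᵀ) + ρ * linf (V * Vᵀ) + two2inf U * two2inf V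

/-- Number of nonzero entries. -/
def suppCard {m n : ℕ} (X : Matrix (Fin m) (Fin n) ℝ) : ℕ :=
  (Finset.univ.filter fun p : Fin m × Fin n => X p.1 p.2 ≠ 0).card

/-! ### Auxiliary lemmas -/

private lemma bddA {k : ℕ} (f : Fin k → ℝ) : BddAbove (Set.range f) :=
  (Set.finite_range f).bddAbove

lemma sign_mul_self (x : ℝ) : Real.sign x * x = |x| := by
  rcases lt_trichotomy x 0 with h|h|h
  · rw [Real.sign_of_neg h, abs_of_neg h]; ring
  · simp [h]
  · rw [Real.sign_of_pos h, abs_of_pos h]; ring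

lemma abs_sign_le_one (x : ℝ) : |Real.sign x| ≤ 1 := by
  rcases lt_trichotomy x 0 with h|h|h
  · simp [Real.sign_of_neg h]
  · simp [h]
  · simp [Real.sign_of_pos h]

lemma abs_sign_of_ne {x : ℝ} (hx : x ≠ 0) : |Real.sign x| = 1 := by
  rcases lt_trichotomy x 0 with h|h|h
  · simp [Real.sign_of_neg h]
  · exact absurd h hx
  · simp [Real.sign_of_pos h]

section Norms
variable {m n r : ℕ}

lemma l1_nonneg (M : Matrix (Fin m) (Fin n) ℝ) : 0 ≤ l1 M :=
  Finset.sum_nonneg fun _ _ => Finset.sum_nonneg fun _ _ => abs_nonneg _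

lemma abs_le_linf [Nonempty (Fin m)] [Nonempty (Fin n)] (A : Matrix (Fin m) (Fin n) ℝ)
    (i : Fin m) (j : Fin n) : |A i j| ≤ linf A := by
  unfold linf
  exact le_trans (le_ciSup (f := fun j => |A i j|) (bddA _) j)
    (le_ciSup (f := fun i => ⨆ j, |A i j|) (bddA _) i)

lemma linf_nonneg [Nonempty (Fin m)] [Nonempty (Fin n)] (A : Matrix (Fin m) (Fin n) ℝ) :
    0 ≤ linf A :=
  le_trans (abs_nonneg _) (abs_le_linf A (Classical.arbitrary _) (Classical.arbitrary _))

lemma colsum_le_n11 (A : Matrix (Fin m) (Fin n) ℝ) (j : Fin n) : ∑ i, |A i j| ≤ n11 A := by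
  unfold n11; exact le_ciSup (f := fun j => ∑ i, |A i j|) (bddA _) j

lemma rowsum_le_nII (A : Matrix (Fin m) (Fin n) ℝ) (i : Fin m) : ∑ j, |A i j| ≤ nII A := by
  unfold nII; exact le_ciSup (f := fun i => ∑ j, |A i j|) (bddA _) i

lemma n11_nonneg [Nonempty (Fin n)] (A : Matrix (Fin m) (Fin n) ℝ) : 0 ≤ n11 A :=
  le_trans (Finset.sum_nonneg fun _ _ => abs_nonneg _) (colsum_le_n11 A (Classical.arbitrary _))

lemma nII_nonneg [Nonempty (Fin m)] (A : Matrix (Fin m) (Fin n) ℝ) : 0 ≤ nII A :=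
  le_trans (Finset.sum_nonneg fun _ _ => abs_nonneg _) (rowsum_le_nII A (Classical.arbitrary _))

lemma sqrt_rowsq_le_two2inf (U : Matrix (Fin m) (Fin r) ℝ) (i : Fin m) :
    Real.sqrt (∑ k, (U i k) ^ 2) ≤ two2inf U := by
  unfold two2inf; exact le_ciSup (f := fun i => Real.sqrt (∑ k, (U i k) ^ 2)) (bddA _) i

lemma two2inf_nonneg [Nonempty (Fin m)] (U : Matrix (Fin m) (Fin r) ℝ) : 0 ≤ two2inf U :=
  le_trans (Real.sqrt_nonneg _) (sqrt_rowsq_le_two2inf U (Classical.arbitrary _))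

lemma beta_nonneg [Nonempty (Fin m)] [Nonempty (Fin n)] (U : Matrix (Fin m) (Fin r) ℝ)
    (V : Matrix (Fin n) (Fin r) ℝ) {ρ : ℝ} (hρ : 0 < ρ) : 0 ≤ beta U V ρ := by
  have h1 := linf_nonneg (U * Uᵀ)
  have h2 := linf_nonneg (V * Vᵀ)
  have h3 := two2inf_nonneg U
  have h4 := two2inf_nonneg V
  have h5 : (0:ℝ) ≤ ρ⁻¹ := by positivity
  unfold beta
  positivity

end Norms

section Inner
variable {m n : ℕ}

lemma inner'_eq_trace (A B : Matrix (Fin m) (Fin n) ℝ) : inner' A B = Matrix.trace (Aᵀ * B) := by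
  simp only [inner', Matrix.trace, Matrix.diag_apply, Matrix.mul_apply, Matrix.transpose_apply]
  rw [Finset.sum_comm]

lemma inner'_mul_left (P : Matrix (Fin m) (Fin m) ℝ) (A B : Matrix (Fin m) (Fin n) ℝ) :
    inner' (P * A) B = inner' A (Pᵀ * B) := by
  rw [inner'_eq_trace, inner'_eq_trace, Matrix.transpose_mul, Matrix.mul_assoc]

lemma inner'_mul_right (P : Matrix (Fin n) (Fin n) ℝ) (A B : Matrix (Fin m) (Fin n) ℝ) :
    inner' (A * P) B = inner' A (B * Pᵀ) := by
  rw [inner'_eq_trace, inner'_eq_trace, Matrix.transpose_mul, Matrix.mul_assoc,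
    Matrix.trace_mul_comm, Matrix.mul_assoc]

lemma inner'_mul_left' (P : Matrix (Fin m) (Fin m) ℝ) (A B : Matrix (Fin m) (Fin n) ℝ) :
    inner' A (P * B) = inner' (Pᵀ * A) B := by
  rw [inner'_mul_left, Matrix.transpose_transpose]

lemma inner'_mul_right' (P : Matrix (Fin n) (Fin n) ℝ) (A B : Matrix (Fin m) (Fin n) ℝ) :
    inner' A (B * P) = inner' (A * Pᵀ) B := by
  rw [inner'_mul_right, Matrix.transpose_transpose]

lemma inner'_add_right (A B C : Matrix (Fin m) (Fin n) ℝ) :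
    inner' A (B + C) = inner' A B + inner' A C := by
  simp [inner', Matrix.add_apply, mul_add, Finset.sum_add_distrib]

lemma inner'_sub_right (A B C : Matrix (Fin m) (Fin n) ℝ) :
    inner' A (B - C) = inner' A B - inner' A C := by
  simp [inner', Matrix.sub_apply, mul_sub, Finset.sum_sub_distrib]

lemma inner'_add_left (A B C : Matrix (Fin m) (Fin n) ℝ) :
    inner' (A + B) C = inner' A C + inner' B C := by
  simp [inner', Matrix.add_apply, add_mul, Finset.sum_add_distrib]

lemma inner'_sub_left (A B C : Matrix (Fin m) (Fin n) ℝ) :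
    inner' (A - B) C = inner' A C - inner' B C := by
  simp [inner', Matrix.sub_apply, sub_mul, Finset.sum_sub_distrib]

lemma inner'_PT {r : ℕ} (U : Matrix (Fin m) (Fin r) ℝ) (V : Matrix (Fin n) (Fin r) ℝ)
    (Q M : Matrix (Fin m) (Fin n) ℝ) : inner' Q (PT U V M) = inner' (PT U V Q) M := by
  have hsU : (U * Uᵀ)ᵀ = U * Uᵀ := by rw [Matrix.transpose_mul, Matrix.transpose_transpose]
  have hsV : (V * Vᵀ)ᵀ = V * Vᵀ := by rw [Matrix.transpose_mul, Matrix.transpose_transpose]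
  unfold PT
  rw [inner'_sub_right, inner'_add_right, inner'_sub_left, inner'_add_left]
  congr 1
  · congr 1
    · rw [inner'_mul_left' (U * Uᵀ), hsU]
    · rw [inner'_mul_right' (V * Vᵀ), hsV]
  · rw [inner'_mul_right' (V * Vᵀ), hsV, inner'_mul_left' (U * Uᵀ), hsU,
      Matrix.mul_assoc (U * Uᵀ) Q (V * Vᵀ)]

lemma inner'_le_linf_mul_l1 [Nonempty (Fin m)] [Nonempty (Fin n)]
    (A B : Matrix (Fin m) (Fin n) ℝ) : inner' A B ≤ linf A * l1 B := by
  unfold inner' l1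
  rw [Finset.mul_sum]
  refine Finset.sum_le_sum fun i _ => ?_
  rw [Finset.mul_sum]
  refine Finset.sum_le_sum fun j _ => ?_
  calc A i j * B i j ≤ |A i j * B i j| := le_abs_self _
    _ = |A i j| * |B i j| := abs_mul _ _
    _ ≤ linf A * |B i j| := mul_le_mul_of_nonneg_right (abs_le_linf _ _ _) (abs_nonneg _)

lemma l1_eq_inner_sign (M : Matrix (Fin m) (Fin n) ℝ) : l1 M = inner' (signM M) M := by
  unfold l1 inner' signM
  refine Finset.sum_congr rfl fun i _ => Finset.sum_congr rfl fun j _ => ?_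
  simp only [Matrix.of_apply]
  exact (sign_mul_self _).symm

end Inner

section Schur
variable {m n r : ℕ}

lemma schur [Nonempty (Fin m)] [Nonempty (Fin n)] (Q : Matrix (Fin m) (Fin n) ℝ)
    (a : Fin m → ℝ) (b : Fin n → ℝ) :
    ∑ k, ∑ l, |a k| * |Q k l| * |b l| ≤
      Real.sqrt (nII Q) * Real.sqrt (n11 Q) *
        (Real.sqrt (∑ k, (a k) ^ 2) * Real.sqrt (∑ l, (b l) ^ 2)) := by
  have key := Real.sum_mul_le_sqrt_mul_sqrt (Finset.univ : Finset (Fin m × Fin n))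
    (fun p => |a p.1| * Real.sqrt |Q p.1 p.2|) (fun p => Real.sqrt |Q p.1 p.2| * |b p.2|)
  have e0 : ∑ p : Fin m × Fin n,
      (|a p.1| * Real.sqrt |Q p.1 p.2|) * (Real.sqrt |Q p.1 p.2| * |b p.2|)
      = ∑ k, ∑ l, |a k| * |Q k l| * |b l| := by
    rw [Fintype.sum_prod_type]
    refine Finset.sum_congr rfl fun k _ => Finset.sum_congr rfl fun l _ => ?_
    have : Real.sqrt |Q k l| * Real.sqrt |Q k l| = |Q k l| :=
      Real.mul_self_sqrt (abs_nonneg _)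
    calc (|a k| * Real.sqrt |Q k l|) * (Real.sqrt |Q k l| * |b l|)
        = |a k| * (Real.sqrt |Q k l| * Real.sqrt |Q k l|) * |b l| := by ring
      _ = |a k| * |Q k l| * |b l| := by rw [this]
  have e1 : ∑ p : Fin m × Fin n, (|a p.1| * Real.sqrt |Q p.1 p.2|) ^ 2
      ≤ nII Q * ∑ k, (a k) ^ 2 := by
    rw [Fintype.sum_prod_type]
    have step : ∀ k : Fin m, ∑ l, (|a k| * Real.sqrt |Q k l|) ^ 2
        ≤ (a k) ^ 2 * nII Q := by
      intro k
      have : ∀ l : Fin n, (|a k| * Real.sqrt |Q k l|) ^ 2 = (a k) ^ 2 * |Q k l| := by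
        intro l
        rw [mul_pow, sq_abs, Real.sq_sqrt (abs_nonneg _)]
      rw [Finset.sum_congr rfl fun l _ => this l, ← Finset.mul_sum]
      exact mul_le_mul_of_nonneg_left (rowsum_le_nII Q k) (sq_nonneg _)
    calc ∑ k, ∑ l, (|a k| * Real.sqrt |Q k l|) ^ 2 ≤ ∑ k, (a k) ^ 2 * nII Q :=
          Finset.sum_le_sum fun k _ => step k
      _ = nII Q * ∑ k, (a k) ^ 2 := by rw [← Finset.sum_mul, mul_comm]
  have e2 : ∑ p : Fin m × Fin n, (Real.sqrt |Q p.1 p.2| * |b p.2|) ^ 2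
      ≤ n11 Q * ∑ l, (b l) ^ 2 := by
    rw [Fintype.sum_prod_type, Finset.sum_comm]
    have step : ∀ l : Fin n, ∑ k, (Real.sqrt |Q k l| * |b l|) ^ 2
        ≤ (b l) ^ 2 * n11 Q := by
      intro l
      have : ∀ k : Fin m, (Real.sqrt |Q k l| * |b l|) ^ 2 = (b l) ^ 2 * |Q k l| := by
        intro k
        rw [mul_pow, sq_abs, Real.sq_sqrt (abs_nonneg _)]; ring
      rw [Finset.sum_congr rfl fun k _ => this k, ← Finset.mul_sum]
      exact mul_le_mul_of_nonneg_left (colsum_le_n11 Q l) (sq_nonneg _)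
    calc ∑ l, ∑ k, (Real.sqrt |Q k l| * |b l|) ^ 2 ≤ ∑ l, (b l) ^ 2 * n11 Q :=
          Finset.sum_le_sum fun l _ => step l
      _ = n11 Q * ∑ l, (b l) ^ 2 := by rw [← Finset.sum_mul, mul_comm]
  rw [e0] at key
  refine key.trans ?_
  have hII := nII_nonneg Q
  have h11 := n11_nonneg Q
  calc Real.sqrt (∑ p : Fin m × Fin n, (|a p.1| * Real.sqrt |Q p.1 p.2|) ^ 2) *
        Real.sqrt (∑ p : Fin m × Fin n, (Real.sqrt |Q p.1 p.2| * |b p.2|) ^ 2)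
      ≤ Real.sqrt (nII Q * ∑ k, (a k) ^ 2) * Real.sqrt (n11 Q * ∑ l, (b l) ^ 2) :=
        mul_le_mul (Real.sqrt_le_sqrt e1) (Real.sqrt_le_sqrt e2)
          (Real.sqrt_nonneg _) (Real.sqrt_nonneg _)
    _ = Real.sqrt (nII Q) * Real.sqrt (n11 Q) *
        (Real.sqrt (∑ k, (a k) ^ 2) * Real.sqrt (∑ l, (b l) ^ 2)) := by
        rw [Real.sqrt_mul hII, Real.sqrt_mul h11]; ring

lemma gram_sq (U : Matrix (Fin m) (Fin r) ℝ) (hU : Uᵀ * U = 1) (i : Fin m) :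
    ∑ k, ((U * Uᵀ) i k) ^ 2 = ∑ k, (U i k) ^ 2 := by
  have hsym : ∀ k l : Fin m, (U * Uᵀ) k l = (U * Uᵀ) l k := by
    intro k l
    simp only [Matrix.mul_apply, Matrix.transpose_apply]
    exact Finset.sum_congr rfl fun t _ => mul_comm _ _
  have hid : (U * Uᵀ) * (U * Uᵀ) = U * Uᵀ := by
    calc (U * Uᵀ) * (U * Uᵀ) = U * ((Uᵀ * U) * Uᵀ) := by
          rw [Matrix.mul_assoc, ← Matrix.mul_assoc Uᵀ U Uᵀ]
      _ = U * Uᵀ := by rw [hU, Matrix.one_mul]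
  calc ∑ k, ((U * Uᵀ) i k) ^ 2 = ∑ k, (U * Uᵀ) i k * (U * Uᵀ) k i := by
        refine Finset.sum_congr rfl fun k _ => ?_
        rw [sq, hsym k i]
    _ = ((U * Uᵀ) * (U * Uᵀ)) i i := (Matrix.mul_apply).symm
    _ = (U * Uᵀ) i i := by rw [hid]
    _ = ∑ k, (U i k) ^ 2 := by
        simp only [Matrix.mul_apply, Matrix.transpose_apply, sq]

end Schur

section Main
variable {m n r : ℕ}

lemma linf_PT_le [Nonempty (Fin m)] [Nonempty (Fin n)]
    (U : Matrix (Fin m) (Fin r) ℝ) (V : Matrix (Fin n) (Fin r) ℝ)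
    (hU : Uᵀ * U = 1) (hV : Vᵀ * V = 1) {ρ : ℝ} (hρ : 0 < ρ)
    (Q : Matrix (Fin m) (Fin n) ℝ) :
    linf (PT U V Q) ≤ beta U V ρ * sharp ρ Q := by
  set s := sharp ρ Q with hs
  have hs0 : 0 ≤ s :=
    le_trans (mul_nonneg hρ.le (n11_nonneg Q)) (le_max_left _ _)
  have h11 : n11 Q ≤ ρ⁻¹ * s := by
    have h : ρ * n11 Q ≤ s := le_max_left _ _
    calc n11 Q = ρ⁻¹ * (ρ * n11 Q) := by field_simp
      _ ≤ ρ⁻¹ * s := mul_le_mul_of_nonneg_left h (by positivity)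
  have hII : nII Q ≤ ρ * s := by
    have h : ρ⁻¹ * nII Q ≤ s := le_max_right _ _
    calc nII Q = ρ * (ρ⁻¹ * nII Q) := by field_simp
      _ ≤ ρ * s := mul_le_mul_of_nonneg_left h hρ.le
  unfold linf
  refine ciSup_le fun i => ciSup_le fun j => ?_
  -- entry decomposition
  have hexp : |(PT U V Q) i j| ≤
      |(U * Uᵀ * Q) i j| + |(Q * (V * Vᵀ)) i j| + |(U * Uᵀ * Q * (V * Vᵀ)) i j| := by
    have : (PT U V Q) i j =
        (U * Uᵀ * Q) i j + (Q * (V * Vᵀ)) i j - (U * Uᵀ * Q * (V * Vᵀ)) i j := by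
      simp [PT]
    rw [this, sub_eq_add_neg]
    refine (abs_add_le _ _).trans ?_
    rw [abs_neg]
    exact add_le_add (abs_add_le _ _) le_rfl
  have hlU := linf_nonneg (U * Uᵀ)
  have hlV := linf_nonneg (V * Vᵀ)
  have t1 : |(U * Uᵀ * Q) i j| ≤ linf (U * Uᵀ) * (ρ⁻¹ * s) := by
    calc |(U * Uᵀ * Q) i j| = |∑ k, (U * Uᵀ) i k * Q k j| := by rw [Matrix.mul_apply]
      _ ≤ ∑ k, |(U * Uᵀ) i k * Q k j| := Finset.abs_sum_le_sum_abs _ _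
      _ ≤ ∑ k, linf (U * Uᵀ) * |Q k j| := Finset.sum_le_sum fun k _ => by
          rw [abs_mul]
          exact mul_le_mul_of_nonneg_right (abs_le_linf _ _ _) (abs_nonneg _)
      _ = linf (U * Uᵀ) * ∑ k, |Q k j| := by rw [Finset.mul_sum]
      _ ≤ linf (U * Uᵀ) * n11 Q := mul_le_mul_of_nonneg_left (colsum_le_n11 _ _) hlU
      _ ≤ linf (U * Uᵀ) * (ρ⁻¹ * s) := mul_le_mul_of_nonneg_left h11 hlU
  have t2 : |(Q * (V * Vᵀ)) i j| ≤ linf (V * Vᵀ) * (ρ * s) := by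
    calc |(Q * (V * Vᵀ)) i j| = |∑ l, Q i l * (V * Vᵀ) l j| := by rw [Matrix.mul_apply]
      _ ≤ ∑ l, |Q i l * (V * Vᵀ) l j| := Finset.abs_sum_le_sum_abs _ _
      _ ≤ ∑ l, linf (V * Vᵀ) * |Q i l| := Finset.sum_le_sum fun l _ => by
          rw [abs_mul, mul_comm]
          exact mul_le_mul_of_nonneg_right (abs_le_linf _ _ _) (abs_nonneg _)
      _ = linf (V * Vᵀ) * ∑ l, |Q i l| := by rw [Finset.mul_sum]
      _ ≤ linf (V * Vᵀ) * nII Q := mul_le_mul_of_nonneg_left (rowsum_le_nII _ _) hlV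
      _ ≤ linf (V * Vᵀ) * (ρ * s) := mul_le_mul_of_nonneg_left hII hlV
  have t3 : |(U * Uᵀ * Q * (V * Vᵀ)) i j| ≤ two2inf U * two2inf V * s := by
    have habs : |(U * Uᵀ * Q * (V * Vᵀ)) i j| ≤
        ∑ k, ∑ l, |(U * Uᵀ) i k| * |Q k l| * |(V * Vᵀ) l j| := by
      calc |(U * Uᵀ * Q * (V * Vᵀ)) i j|
          = |∑ l, (U * Uᵀ * Q) i l * (V * Vᵀ) l j| := by rw [Matrix.mul_apply]
        _ ≤ ∑ l, |(U * Uᵀ * Q) i l * (V * Vᵀ) l j| := Finset.abs_sum_le_sum_abs _ _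
        _ ≤ ∑ l, (∑ k, |(U * Uᵀ) i k| * |Q k l|) * |(V * Vᵀ) l j| := by
            refine Finset.sum_le_sum fun l _ => ?_
            rw [abs_mul]
            refine mul_le_mul_of_nonneg_right ?_ (abs_nonneg _)
            rw [Matrix.mul_apply]
            refine (Finset.abs_sum_le_sum_abs _ _).trans ?_
            exact Finset.sum_le_sum fun k _ => le_of_eq (abs_mul _ _)
        _ = ∑ l, ∑ k, |(U * Uᵀ) i k| * |Q k l| * |(V * Vᵀ) l j| := by
            refine Finset.sum_congr rfl fun l _ => ?_
            rw [Finset.sum_mul]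
        _ = ∑ k, ∑ l, |(U * Uᵀ) i k| * |Q k l| * |(V * Vᵀ) l j| := Finset.sum_comm
    refine habs.trans ?_
    refine (schur Q (fun k => (U * Uᵀ) i k) (fun l => (V * Vᵀ) l j)).trans ?_
    have ha : Real.sqrt (∑ k, ((U * Uᵀ) i k) ^ 2) ≤ two2inf U := by
      rw [gram_sq U hU i]
      exact sqrt_rowsq_le_two2inf U i
    have hb : Real.sqrt (∑ l, ((V * Vᵀ) l j) ^ 2) ≤ two2inf V := by
      have hsym : ∀ l : Fin n, (V * Vᵀ) l j = (V * Vᵀ) j l := by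
        intro l
        simp only [Matrix.mul_apply, Matrix.transpose_apply]
        exact Finset.sum_congr rfl fun t _ => mul_comm _ _
      have : ∑ l, ((V * Vᵀ) l j) ^ 2 = ∑ l, ((V * Vᵀ) j l) ^ 2 :=
        Finset.sum_congr rfl fun l _ => by rw [hsym l]
      rw [this, gram_sq V hV j]
      exact sqrt_rowsq_le_two2inf V j
    have hsq : Real.sqrt (nII Q) * Real.sqrt (n11 Q) ≤ s := by
      rw [← Real.sqrt_mul (nII_nonneg Q)]
      have hprod : nII Q * n11 Q ≤ (ρ * s) * (ρ⁻¹ * s) :=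
        mul_le_mul hII h11 (n11_nonneg Q) (by positivity)
      refine (Real.sqrt_le_sqrt hprod).trans ?_
      have : (ρ * s) * (ρ⁻¹ * s) = s ^ 2 := by field_simp
      rw [this, Real.sqrt_sq hs0]
    calc Real.sqrt (nII Q) * Real.sqrt (n11 Q) *
          (Real.sqrt (∑ k, ((U * Uᵀ) i k) ^ 2) * Real.sqrt (∑ l, ((V * Vᵀ) l j) ^ 2))
        ≤ s * (two2inf U * two2inf V) := by
          refine mul_le_mul hsq ?_ (by positivity) hs0
          exact mul_le_mul ha hb (Real.sqrt_nonneg _) (two2inf_nonneg U)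
      _ = two2inf U * two2inf V * s := by ring
  calc |(PT U V Q) i j|
      ≤ |(U * Uᵀ * Q) i j| + |(Q * (V * Vᵀ)) i j| + |(U * Uᵀ * Q * (V * Vᵀ)) i j| := hexp
    _ ≤ linf (U * Uᵀ) * (ρ⁻¹ * s) + linf (V * Vᵀ) * (ρ * s) + two2inf U * two2inf V * s :=
        add_le_add (add_le_add t1 t2) t3
    _ = beta U V ρ * s := by unfold beta; ring

lemma sharp_sign_le_alpha [Nonempty (Fin m)] [Nonempty (Fin n)]
    (Xs M : Matrix (Fin m) (Fin n) ℝ) {ρ : ℝ} (hρ : 0 < ρ)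
    (hsupp : ∀ i j, Xs i j = 0 → M i j = 0) :
    sharp ρ (signM M) ≤ alpha Xs ρ := by
  have hent : ∀ i j, |signM M i j| ≤ |signM Xs i j| := by
    intro i j
    by_cases hx : Xs i j = 0
    · simp [signM, hsupp i j hx, hx]
    · calc |signM M i j| ≤ 1 := abs_sign_le_one _
        _ = |signM Xs i j| := (abs_sign_of_ne hx).symm
  have h11 : n11 (signM M) ≤ n11 (signM Xs) := by
    unfold n11
    refine ciSup_le fun j => ?_
    exact le_trans (Finset.sum_le_sum fun i _ => hent i j) (colsum_le_n11 _ j)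
  have hII : nII (signM M) ≤ nII (signM Xs) := by
    unfold nII
    refine ciSup_le fun i => ?_
    exact le_trans (Finset.sum_le_sum fun j _ => hent i j) (rowsum_le_nII _ i)
  unfold sharp alpha
  exact max_le_max (mul_le_mul_of_nonneg_left h11 hρ.le)
    (mul_le_mul_of_nonneg_left hII (by positivity))

lemma proj_fix_left (U : Matrix (Fin m) (Fin r) ℝ)
    (Xl X₁ : Matrix (Fin m) (Fin n) ℝ) (hXlU : U * Uᵀ * Xl = Xl)
    (h1 : LinearMap.range X₁.mulVecLin ≤ LinearMap.range Xl.mulVecLin) :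
    U * Uᵀ * X₁ = X₁ := by
  ext i j
  obtain ⟨w, hw⟩ := h1 (LinearMap.mem_range_self _ (Pi.single j 1))
  rw [Matrix.mulVecLin_apply, Matrix.mulVecLin_apply] at hw
  have hc : (U * Uᵀ * X₁) *ᵥ Pi.single j 1 = X₁ *ᵥ Pi.single j 1 := by
    calc (U * Uᵀ * X₁) *ᵥ Pi.single j 1 = (U * Uᵀ) *ᵥ (X₁ *ᵥ Pi.single j 1) :=
          (Matrix.mulVec_mulVec _ _ _).symm
      _ = (U * Uᵀ) *ᵥ (Xl *ᵥ w) := by rw [hw]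
      _ = (U * Uᵀ * Xl) *ᵥ w := Matrix.mulVec_mulVec _ _ _
      _ = Xl *ᵥ w := by rw [hXlU]
      _ = X₁ *ᵥ Pi.single j 1 := hw
  have h2 := congrFun hc i
  simpa [Matrix.mulVec_single] using h2

lemma PT_fix (U : Matrix (Fin m) (Fin r) ℝ) (V : Matrix (Fin n) (Fin r) ℝ)
    (A B : Matrix (Fin m) (Fin n) ℝ) (hA : U * Uᵀ * A = A) (hB : B * (V * Vᵀ) = B) :
    PT U V (A + B) = A + B := by
  unfold PT
  have e1 : U * Uᵀ * (A + B) = A + U * Uᵀ * B := by rw [Matrix.mul_add, hA]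
  have e2 : (A + B) * (V * Vᵀ) = A * (V * Vᵀ) + B := by rw [Matrix.add_mul, hB]
  have e3 : U * Uᵀ * (A + B) * (V * Vᵀ) = A * (V * Vᵀ) + U * Uᵀ * B := by
    rw [e1, Matrix.add_mul, Matrix.mul_assoc (U * Uᵀ) B (V * Vᵀ), hB]
  rw [e3, e1, e2]
  abel

end Main

/-- identifiability, `Ω̄ ∩ T̄ = {0}` when `inf_ρ α(ρ)β(ρ) < 1`. -/
theorem identifiability {m n r : ℕ} (Xs Xl : Matrix (Fin m) (Fin n) ℝ)
    (U : Matrix (Fin m) (Fin r) ℝ) (V : Matrix (Fin n) (Fin r) ℝ) (σ : Fin r → ℝ)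
    (hσ : ∀ i, 0 < σ i) (hU : Uᵀ * U = 1) (hV : Vᵀ * V = 1)
    (hXl : Xl = U * Matrix.diagonal σ * Vᵀ)
    (h : ∃ ρ > 0, alpha Xs ρ * beta U V ρ < 1) :
    ∀ M : Matrix (Fin m) (Fin n) ℝ,
      (∀ i j, Xs i j = 0 → M i j = 0) →
      (∃ X₁ X₂ : Matrix (Fin m) (Fin n) ℝ, M = X₁ + X₂ ∧
        LinearMap.range X₁.mulVecLin ≤ LinearMap.range Xl.mulVecLin ∧
        LinearMap.range X₂ᵀ.mulVecLin ≤ LinearMap.range Xlᵀ.mulVecLin) →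
      M = 0 := by
  intro M hsupp hT
  rcases Nat.eq_zero_or_pos m with hm | hm
  · subst hm; ext i j; exact i.elim0
  rcases Nat.eq_zero_or_pos n with hn | hn
  · subst hn; ext i j; exact j.elim0
  haveI : Nonempty (Fin m) := Fin.pos_iff_nonempty.mp hm
  haveI : Nonempty (Fin n) := Fin.pos_iff_nonempty.mp hn
  obtain ⟨ρ, hρ, hαβ⟩ := h
  obtain ⟨X₁, X₂, hM, h1, h2⟩ := hT
  have hUU : U * Uᵀ * U = U := by rw [Matrix.mul_assoc, hU, Matrix.mul_one]
  have hVV : V * Vᵀ * V = V := by rw [Matrix.mul_assoc, hV, Matrix.mul_one]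
  have hXlU : U * Uᵀ * Xl = Xl := by
    rw [hXl]; simp only [← Matrix.mul_assoc]; rw [hUU]
  have hXlV : V * Vᵀ * Xlᵀ = Xlᵀ := by
    rw [hXl]
    simp only [Matrix.transpose_mul, Matrix.transpose_transpose, Matrix.diagonal_transpose]
    simp only [← Matrix.mul_assoc]; rw [hVV]
  have hA : U * Uᵀ * X₁ = X₁ := proj_fix_left U Xl X₁ hXlU h1
  have hBt : V * Vᵀ * X₂ᵀ = X₂ᵀ := proj_fix_left V Xlᵀ X₂ᵀ hXlV h2
  have hB : X₂ * (V * Vᵀ) = X₂ := by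
    have := congrArg Matrix.transpose hBt
    simpa [Matrix.transpose_mul, Matrix.transpose_transpose] using this
  have hfix : PT U V M = M := by rw [hM]; exact PT_fix U V X₁ X₂ hA hB
  set Q := signM M with hQ
  have hL0 := l1_nonneg M
  have hbeta := beta_nonneg U V hρ
  have key : l1 M ≤ alpha Xs ρ * beta U V ρ * l1 M := by
    calc l1 M = inner' Q M := l1_eq_inner_sign M
      _ = inner' Q (PT U V M) := by rw [hfix]
      _ = inner' (PT U V Q) M := inner'_PT U V Q M
      _ ≤ linf (PT U V Q) * l1 M := inner'_le_linf_mul_l1 _ _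
      _ ≤ (beta U V ρ * sharp ρ Q) * l1 M :=
          mul_le_mul_of_nonneg_right (linf_PT_le U V hU hV hρ Q) hL0
      _ ≤ (beta U V ρ * alpha Xs ρ) * l1 M := by
          refine mul_le_mul_of_nonneg_right (mul_le_mul_of_nonneg_left ?_ hbeta) hL0
          exact sharp_sign_le_alpha Xs M hρ hsupp
      _ = alpha Xs ρ * beta U V ρ * l1 M := by ring
  have hzero : l1 M ≤ 0 := by nlinarith [key, hαβ, hL0]
  have hl1 : l1 M = 0 := le_antisymm hzero hL0
  ext i j
  have hb1 : |M i j| ≤ ∑ j', |M i j'| :=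
    Finset.single_le_sum (f := fun j' => |M i j'|) (fun _ _ => abs_nonneg _)
      (Finset.mem_univ j)
  have hb2 : ∑ j', |M i j'| ≤ l1 M :=
    Finset.single_le_sum (f := fun i' => ∑ j', |M i' j'|)
      (fun _ _ => Finset.sum_nonneg fun _ _ => abs_nonneg _) (Finset.mem_univ i)
  have hij : |M i j| = 0 :=
    le_antisymm ((hb1.trans hb2).trans hl1.le) (abs_nonneg _)
  simpa using abs_eq_zero.mp hij

end SLR
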